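/- Let D be a distributive lattice, B a Boolean algebra, and f : D → B an injective bounded lattice homomorphism such that every element of B is a finite join ⋁_{i=1}^{n} (f(aᵢ) ⊓ f(bᵢ)ᶜ) with aᵢ, bᵢ ∈ D. Then for every Boolean algebra C and every bounded lattice homomorphism g : D → C there exists a unique bounded lattice homomorphism h : B → C with h ∘ f = g. (In other words, f exhibits B as the free Boolean algebra on the distributive lattice D.) -/

import Mathlib

section Aux

variable {D : Type*} [DistribLattice D] [BoundedOrder D]

/-- Pure Boolean algebra recursion step. -/
private lemma fba_key {E : Type*} [BooleanAlgebra E] (x y u v X : E) :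
    x ⊓ yᶜ ≤ (u ⊓ vᶜ) ⊔ X ↔ (x ⊓ (y ⊔ u)ᶜ ≤ X ∧ (x ⊓ v) ⊓ yᶜ ≤ X) := by
  simp only [← sdiff_eq]
  rw [← sdiff_le_iff]
  have : (x \ y) \ (u \ v) = (x \ (y ⊔ u)) ⊔ ((x ⊓ v) \ y) := by
    simp only [sdiff_eq, compl_inf, compl_compl, compl_sup]
    rw [inf_sup_left]
    ac_rfl
  rw [this, sup_le_iff]

/-- Transfer of a single normal-form inequality from an order-reflecting hom to any hom. -/
private lemma fba_transfer {E F : Type*} [BooleanAlgebra E] [BooleanAlgebra F]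
    (φ : BoundedLatticeHom D E) (ψ : BoundedLatticeHom D F)
    (hφ : ∀ a b : D, φ a ≤ φ b → a ≤ b)
    {ι : Type*} (s : Finset ι) (c d : ι → D) :
    ∀ a b : D, φ a ⊓ (φ b)ᶜ ≤ s.sup (fun j => φ (c j) ⊓ (φ (d j))ᶜ) →
      ψ a ⊓ (ψ b)ᶜ ≤ s.sup (fun j => ψ (c j) ⊓ (ψ (d j))ᶜ) := by
  classical
  induction s using Finset.cons_induction with
  | empty =>
    intro a b h
    simp only [Finset.sup_empty, le_bot_iff, ← sdiff_eq, sdiff_eq_bot_iff] at h ⊢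
    exact OrderHomClass.mono ψ (hφ _ _ h)
  | cons j s hj ih =>
    intro a b h
    rw [Finset.sup_cons, fba_key] at h ⊢
    refine ⟨?_, ?_⟩
    · have := ih a (b ⊔ c j) (by simpa [map_sup] using h.1)
      simpa [map_sup] using this
    · have := ih (a ⊓ d j) b (by simpa [map_inf] using h.2)
      simpa [map_inf] using this

private lemma fba_transfer_le {E F : Type*} [BooleanAlgebra E] [BooleanAlgebra F]
    (φ : BoundedLatticeHom D E) (ψ : BoundedLatticeHom D F)
    (hφ : ∀ a b : D, φ a ≤ φ b → a ≤ b)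
    {ι κ : Type*} (s : Finset ι) (t : Finset κ) (a b : ι → D) (c d : κ → D)
    (h : s.sup (fun i => φ (a i) ⊓ (φ (b i))ᶜ) ≤ t.sup (fun j => φ (c j) ⊓ (φ (d j))ᶜ)) :
    s.sup (fun i => ψ (a i) ⊓ (ψ (b i))ᶜ) ≤ t.sup (fun j => ψ (c j) ⊓ (ψ (d j))ᶜ) :=
  Finset.sup_le fun i hi =>
    fba_transfer φ ψ hφ t c d (a i) (b i) ((Finset.le_sup hi).trans h)

/-- Product representation of a meet of two normal forms. -/
private lemma fba_rep_inf {E : Type*} [BooleanAlgebra E] (φ : BoundedLatticeHom D E)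
    {ι κ : Type*} (s : Finset ι) (t : Finset κ) (a b : ι → D) (c d : κ → D) :
    (s.sup fun i => φ (a i) ⊓ (φ (b i))ᶜ) ⊓ (t.sup fun j => φ (c j) ⊓ (φ (d j))ᶜ)
      = (s ×ˢ t).sup fun p => φ (a p.1 ⊓ c p.2) ⊓ (φ (b p.1 ⊔ d p.2))ᶜ := by
  rw [Finset.sup_inf_sup]
  refine Finset.sup_congr rfl fun p _ => ?_
  simp only [map_inf, map_sup, compl_sup]
  ac_rfl

private lemma fba_sup_disjSum {α ι κ : Type*} [SemilatticeSup α] [OrderBot α]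
    (s : Finset ι) (t : Finset κ) (h : ι ⊕ κ → α) :
    (s.disjSum t).sup h = s.sup (fun i => h (Sum.inl i)) ⊔ t.sup (fun j => h (Sum.inr j)) := by
  simp [Finset.sup_def, Finset.disjSum, Multiset.disjSum, Multiset.map_add, Multiset.sup_add,
    Multiset.map_map, Function.comp]

end Aux

/-- Let `D` be a bounded distributive lattice, `B` a Boolean algebra and
`f : D → B` an injective bounded lattice homomorphism such that every element of `B` is a
finite join `⋁ i, f (a i) ⊓ (f (b i))ᶜ` with `a i, b i ∈ D`.  Then for every Boolean algebra
`C` and every bounded lattice homomorphism `g : D → C` there is a unique bounded lattice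
homomorphism `h : B → C` with `h ∘ f = g`; that is, `f` exhibits `B` as the free Boolean
algebra on the distributive lattice `D`. -/
theorem free_boolean_algebra_of_normal_form
    {D B : Type*} [DistribLattice D] [BoundedOrder D] [BooleanAlgebra B]
    (f : BoundedLatticeHom D B) (hf : Function.Injective f)
    (hgen : ∀ x : B, ∃ (n : ℕ) (a b : Fin n → D),
      x = Finset.univ.sup fun i => f (a i) ⊓ (f (b i))ᶜ) :
    ∀ (C : Type*) [BooleanAlgebra C] (g : BoundedLatticeHom D C),
      ∃! h : BoundedLatticeHom B C, h.comp f = g := by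
  classical
  intro C _ g
  -- f reflects order
  have hrefl : ∀ a b : D, f a ≤ f b → a ≤ b := by
    intro a b h
    have : f (a ⊓ b) = f a := by rw [map_inf]; exact inf_eq_left.2 h
    exact inf_eq_left.1 (hf this)
  choose nn aa bb hrep using hgen
  set F : B → C := fun x => Finset.univ.sup fun i => g (aa x i) ⊓ (g (bb x i))ᶜ with hF
  -- bridging lemma
  have heq : ∀ (x : B) {ι : Type} (s : Finset ι) (c d : ι → D),
      x = s.sup (fun j => f (c j) ⊓ (f (d j))ᶜ) →
      F x = s.sup (fun j => g (c j) ⊓ (g (d j))ᶜ) := by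
    intro x ι s c d hx
    refine le_antisymm ?_ ?_
    · exact fba_transfer_le f g hrefl _ _ _ _ _ _ ((hrep x).symm.trans_le hx.le)
    · exact fba_transfer_le f g hrefl _ _ _ _ _ _ (hx.symm.trans_le (hrep x).le)
  -- the candidate homomorphism
  have hcomp : ∀ a : D, F (f a) = g a := by
    intro a
    have : f a = ({()} : Finset Unit).sup (fun _ => f a ⊓ (f (⊥ : D))ᶜ) := by
      simp [map_bot]
    rw [heq (f a) _ _ _ this]
    simp [map_bot]
  have hsup : ∀ x y : B, F (x ⊔ y) = F x ⊔ F y := by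
    intro x y
    have hrepsup : x ⊔ y = ((Finset.univ.disjSum Finset.univ)).sup
        (fun j => f (Sum.elim (aa x) (aa y) j) ⊓ (f (Sum.elim (bb x) (bb y) j))ᶜ) := by
      rw [fba_sup_disjSum]
      simp only [Sum.elim_inl, Sum.elim_inr]
      rw [← hrep x, ← hrep y]
    rw [heq (x ⊔ y) _ _ _ hrepsup, fba_sup_disjSum]
    simp only [Sum.elim_inl, Sum.elim_inr]
    rfl
  have hinf : ∀ x y : B, F (x ⊓ y) = F x ⊓ F y := by
    intro x y
    have hrepinf : x ⊓ y = ((Finset.univ ×ˢ Finset.univ : Finset (Fin (nn x) × Fin (nn y)))).sup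
        (fun p => f (aa x p.1 ⊓ aa y p.2) ⊓ (f (bb x p.1 ⊔ bb y p.2))ᶜ) := by
      rw [← fba_rep_inf f, ← hrep x, ← hrep y]
    rw [heq (x ⊓ y) _ _ _ hrepinf, ← fba_rep_inf g]
  have htop : F ⊤ = ⊤ := by
    have : (⊤ : B) = ({()} : Finset Unit).sup (fun _ => f (⊤ : D) ⊓ (f (⊥ : D))ᶜ) := by
      simp [map_bot, map_top]
    rw [heq ⊤ _ _ _ this]
    simp [map_bot, map_top]
  have hbot : F ⊥ = ⊥ := by
    have : (⊥ : B) = (∅ : Finset Unit).sup (fun _ => f (⊥ : D) ⊓ (f (⊥ : D))ᶜ) := by simp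
    rw [heq ⊥ _ _ _ this]
    simp
  refine ⟨⟨⟨⟨F, hsup⟩, hinf⟩, htop, hbot⟩, ?_, ?_⟩
  · ext a
    exact hcomp a
  · intro h' hh'
    ext x
    have hx := hrep x
    calc h' x = Finset.univ.sup (fun i => g (aa x i) ⊓ (g (bb x i))ᶜ) := by
          conv_lhs => rw [hx]
          rw [Finset.comp_sup_eq_sup_comp h' (fun a b => map_sup h' a b) (map_bot h')]
          refine Finset.sup_congr rfl fun i _ => ?_
          simp only [Function.comp_apply, map_inf, map_compl']
          have h1 : h' (f (aa x i)) = g (aa x i) := DFunLike.congr_fun hh' (aa x i)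
          have h2 : h' (f (bb x i)) = g (bb x i) := DFunLike.congr_fun hh' (bb x i)
          rw [h1, h2]
      _ = F x := (heq x _ _ _ hx).symm
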